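/- For each α ∈ A, the map j_α : N_α → N_upp is an open embedding, i.e., a homeomorphism onto an open subset of N_upp; moreover j_β ∘ ψ_{αβ} = j_α for all α ≤ β in A. -/
import Mathlib


open Topology Filter

/-- The identification relation on the disjoint union `Σ α, N α`:
`(α,p) ∼ (β,q)` iff (`α ≤ β` and `ψ_{αβ}(p) = q`) or (`β ≤ α` and `ψ_{βα}(q) = p`). -/
def simRel {A : Type*} [LinearOrder A] {N : A → Type*}
    (ψ : ∀ α β : A, α ≤ β → N α → N β) :
    (Σ α, N α) → (Σ α, N α) → Prop :=
  fun x y =>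
    (∃ h : x.1 ≤ y.1, ψ x.1 y.1 h x.2 = y.2) ∨
    (∃ h : y.1 ≤ x.1, ψ y.1 x.1 h y.2 = x.2)

/-- Each `j_α : N_α → N_upp` is an open embedding, and `j_β ∘ ψ_{αβ} = j_α` for `α ≤ β`. -/
theorem j_isOpenEmbedding
    {M : Type*} [TopologicalSpace M]
    {A : Type*} [LinearOrder A] [Nonempty A]
    {N : A → Type*} [∀ α, TopologicalSpace (N α)]
    (ι : ∀ α, M → N α) (hι : ∀ α, IsOpenEmbedding (ι α))
    (ψ : ∀ α β : A, α ≤ β → N α → N β)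
    (hψ : ∀ (α β : A) (h : α ≤ β), IsOpenEmbedding (ψ α β h))
    (hψι : ∀ (α β : A) (h : α ≤ β), (ψ α β h) ∘ (ι α) = ι β)
    (hψid : ∀ (α : A) (h : α ≤ α), ψ α α h = id)
    (hψcomp : ∀ (α β γ : A) (h₁ : α ≤ β) (h₂ : β ≤ γ),
      (ψ β γ h₂) ∘ (ψ α β h₁) = ψ α γ (h₁.trans h₂)) :
    (∀ α : A, IsOpenEmbedding (fun p : N α => Quot.mk (simRel ψ) ⟨α, p⟩)) ∧
    (∀ (α β : A) (h : α ≤ β),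
      (fun p : N α => Quot.mk (simRel ψ) ⟨β, ψ α β h p⟩) =
        (fun p : N α => Quot.mk (simRel ψ) ⟨α, p⟩)) := by
  
  have hinj : ∀ (α β : A) (h : α ≤ β), Function.Injective (ψ α β h) :=
    fun α β h => (hψ α β h).injective
  have hcomp : ∀ (α β γ : A) (h₁ : α ≤ β) (h₂ : β ≤ γ) (p : N α),
      ψ β γ h₂ (ψ α β h₁ p) = ψ α γ (h₁.trans h₂) p :=
    fun α β γ h₁ h₂ p => congrFun (hψcomp α β γ h₁ h₂) p
  have hequiv : Equivalence (simRel ψ) := by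
    constructor
    · rintro ⟨α, p⟩
      exact Or.inl ⟨le_refl α, by rw [hψid α (le_refl α)]; rfl⟩
    · rintro x y h; exact h.elim Or.inr Or.inl
    · rintro ⟨α, p⟩ ⟨β, q⟩ ⟨γ, c⟩ (⟨h1, e1⟩ | ⟨h1, e1⟩) (⟨h2, e2⟩ | ⟨h2, e2⟩)
      · exact Or.inl ⟨h1.trans h2, by rw [← e2, ← e1, hcomp]⟩
      · rcases le_total α γ with h | h
        · exact Or.inl ⟨h, hinj γ β h2 (by rw [hcomp α γ β h h2, e2, ← e1])⟩
        · exact Or.inr ⟨h, hinj α β h1 (by rw [hcomp γ α β h h1, e2, ← e1])⟩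
      · rcases le_total α γ with h | h
        · refine Or.inl ⟨h, ?_⟩
          rw [← e1, hcomp β α γ h1 h]
          exact e2
        · refine Or.inr ⟨h, ?_⟩
          rw [← e2, hcomp β γ α h2 h]
          exact e1
      · refine Or.inr ⟨h2.trans h1, ?_⟩
        rw [← e1, ← e2, hcomp]
  have key : ∀ x y : Σ a, N a,
      Quot.mk (simRel ψ) x = Quot.mk (simRel ψ) y ↔ simRel ψ x y := by
    intro x y
    rw [Quot.eq]
    exact hequiv.eqvGen_iff
  constructor
  · intro α
    refine IsOpenEmbedding.of_continuous_injective_isOpenMap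
      (continuous_quot_mk.comp continuous_sigmaMk) ?_ ?_
    · intro p p' hpp'
      rcases (key _ _).mp hpp' with ⟨h, e⟩ | ⟨h, e⟩
      · rw [hψid α h] at e; exact e
      · rw [hψid α h] at e; exact e.symm
    · intro U hU
      have hpre : Quot.mk (simRel ψ) ⁻¹'
          ((fun p : N α => Quot.mk (simRel ψ) ⟨α, p⟩) '' U)
          = {x : Σ a, N a | ∃ p ∈ U, simRel ψ ⟨α, p⟩ x} := by
        ext x
        simp only [Set.mem_preimage, Set.mem_image, Set.mem_setOf_eq]
        constructor
        · rintro ⟨p, hp, hq⟩; exact ⟨p, hp, (key _ _).mp hq⟩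
        · rintro ⟨p, hp, hr⟩; exact ⟨p, hp, (key _ _).mpr hr⟩
      rw [← isQuotientMap_quot_mk.isOpen_preimage, hpre, isOpen_sigma_iff]
      intro β
      have hfib : Sigma.mk β ⁻¹' {x : Σ a, N a | ∃ p ∈ U, simRel ψ ⟨α, p⟩ x}
          = (⋃ h : α ≤ β, ψ α β h '' U) ∪ ⋃ h : β ≤ α, ψ β α h ⁻¹' U := by
        ext q
        simp only [Set.mem_preimage, Set.mem_setOf_eq, simRel, Set.mem_union,
          Set.mem_iUnion, Set.mem_image]
        constructor
        · rintro ⟨p, hp, (⟨h, e⟩ | ⟨h, e⟩)⟩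
          · exact Or.inl ⟨h, p, hp, e⟩
          · exact Or.inr ⟨h, e.symm ▸ hp⟩
        · rintro (⟨h, p, hp, e⟩ | ⟨h, hq⟩)
          · exact ⟨p, hp, Or.inl ⟨h, e⟩⟩
          · exact ⟨ψ β α h q, hq, Or.inr ⟨h, rfl⟩⟩
      rw [hfib]
      exact (isOpen_iUnion fun h => (hψ α β h).isOpenMap U hU).union
        (isOpen_iUnion fun h => (hψ β α h).continuous.isOpen_preimage U hU)
  · intro α β h
    funext p
    exact Quot.sound (Or.inr ⟨h, rfl⟩)
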